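/- Let 𝒴 = (0,1)² × ℝ, Y₀ ⊂ Y = (0,1)² × (−1/2,1/2) open with positive measure, ε₂, ω > 0, and A a constant real positive-definite 3×3 matrix. If v̂ ∈ ℍ(𝒴) satisfies ∫_𝒴 A∇_z v̂ · ∇_z v̂̄ dz − iω²ε₂∫_{Y₀} |v̂|² dz = 0, then ∇_z v̂ = 0 a.e. in 𝒴 and v̂ = 0 a.e. in Y₀; consequently v̂ = 0 in 𝒴. Hence the cell problem ∫_𝒴 A∇_z v·∇_zψ̄ dz − iω²ε₂∫_{Y₀} v ψ̄ dz = iε₂∫_{Y₀} u₁ ψ̄ dz for all ψ ∈ ℍ(𝒴) has at most one solution in ℍ(𝒴). -/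

import Mathlib

noncomputable section
open MeasureTheory Set

/-- Points of `ℝ³` as functions `Fin 3 → ℝ`. -/
abbrev X3 : Type := Fin 3 → ℝ

/-- The continuous `ℝ`-linear map `ℝ³ → ℂ` associated with a (complex) gradient vector `g`. -/
noncomputable def gradCLM (g : Fin 3 → ℂ) : X3 →L[ℝ] ℂ :=
  ∑ i, g i • (Complex.ofRealCLM.comp (ContinuousLinearMap.proj i : X3 →L[ℝ] ℝ))

/-- The infinite cylinder `𝒴 = (0,1)² × ℝ`. -/
def cylY : Set X3 := {z | z 0 ∈ Ioo (0 : ℝ) 1 ∧ z 1 ∈ Ioo (0 : ℝ) 1}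

/-- The reference cell `Y = (0,1)² × (−1/2, 1/2)`. -/
def cellY : Set X3 := {z ∈ cylY | z 2 ∈ Ioo (-(1 / 2) : ℝ) (1 / 2)}

/-- Membership in `ℍ(𝒴)`: an in-plane periodic `H¹`-function on the cylinder with gradient
`Dψ`, finite `L²(Y)` norm and gradient in `L²(𝒴)`. -/
def MemHper (ψ : X3 → ℂ) (Dψ : X3 → Fin 3 → ℂ) : Prop :=
  (∀ z : X3, HasFDerivAt ψ (gradCLM (Dψ z)) z) ∧
    (∀ z : X3, ψ (z + Pi.single 0 1) = ψ z) ∧ (∀ z : X3, ψ (z + Pi.single 1 1) = ψ z) ∧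
    IntegrableOn (fun z => ‖ψ z‖ ^ 2) cellY ∧
    IntegrableOn (fun z => ∑ i, ‖Dψ z i‖ ^ 2) cylY

/-! ### Auxiliary lemmas -/

lemma gradCLM_apply (g : Fin 3 → ℂ) (x : X3) : gradCLM g x = ∑ i, g i * (x i : ℂ) := by
  simp [gradCLM, ContinuousLinearMap.sum_apply, mul_comm]

lemma gradCLM_single (g : Fin 3 → ℂ) (i : Fin 3) : gradCLM g (Pi.single i 1) = g i := by
  rw [gradCLM_apply]
  rw [Finset.sum_eq_single i] <;> simp +contextual [Pi.single_apply]

lemma gradCLM_sub (g h : Fin 3 → ℂ) : gradCLM (g - h) = gradCLM g - gradCLM h := by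
  ext x
  simp [gradCLM_apply, sub_mul, Finset.sum_sub_distrib]

lemma cont_of_D {ψ : X3 → ℂ} {Dψ : X3 → Fin 3 → ℂ}
    (h : ∀ z, HasFDerivAt ψ (gradCLM (Dψ z)) z) : Continuous ψ :=
  continuous_iff_continuousAt.2 fun z => (h z).continuousAt

lemma meas_of_D {ψ : X3 → ℂ} {Dψ : X3 → Fin 3 → ℂ}
    (h : ∀ z, HasFDerivAt ψ (gradCLM (Dψ z)) z) : Measurable Dψ := by
  have hD : ∀ z i, Dψ z i = fderiv ℝ ψ z (Pi.single i 1) := by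
    intro z i
    rw [(h z).fderiv, gradCLM_single]
  refine measurable_pi_lambda _ fun i => ?_
  have : (fun z => Dψ z i) = fun z => fderiv ℝ ψ z (Pi.single i 1) := funext fun z => hD z i
  rw [this]
  exact measurable_fderiv_apply_const ℝ ψ (Pi.single i 1)

lemma D_periodic {ψ : X3 → ℂ} {Dψ : X3 → Fin 3 → ℂ} {p : X3}
    (hd : ∀ z, HasFDerivAt ψ (gradCLM (Dψ z)) z) (hper : ∀ z, ψ (z + p) = ψ z) :
    ∀ z, Dψ (z + p) = Dψ z := by
  intro z
  have ht : HasFDerivAt (fun z : X3 => z + p) (ContinuousLinearMap.id ℝ X3) z :=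
    (hasFDerivAt_id z).add_const p
  have h1 : HasFDerivAt (fun z => ψ (z + p)) (gradCLM (Dψ (z + p))) z := by
    have := (hd (z + p)).comp z ht
    exact this
  have h2 : HasFDerivAt ψ (gradCLM (Dψ (z + p))) z := by
    have he : (fun z => ψ (z + p)) = ψ := funext hper
    rwa [he] at h1
  have hu := h2.unique (hd z)
  funext i
  have := congrArg (fun L : X3 →L[ℝ] ℂ => L (Pi.single i 1)) hu
  simpa [gradCLM_single] using this

lemma quad_re (A : Matrix (Fin 3) (Fin 3) ℝ) (g : Fin 3 → ℂ) :
    (∑ i, ∑ j, (A i j : ℂ) * g j * star (g i)).re =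
      (∑ i, ∑ j, A i j * (g j).re * (g i).re) + (∑ i, ∑ j, A i j * (g j).im * (g i).im) := by
  rw [Complex.re_sum]
  rw [← Finset.sum_add_distrib]
  refine Finset.sum_congr rfl fun i _ => ?_
  rw [Complex.re_sum, ← Finset.sum_add_distrib]
  refine Finset.sum_congr rfl fun j _ => ?_
  simp [Complex.mul_re, Complex.mul_im]
  try ring

lemma quad_nonneg (A : Matrix (Fin 3) (Fin 3) ℝ)
    (hApos : ∀ ξ : Fin 3 → ℝ, ξ ≠ 0 → 0 < ∑ i, ∑ j, A i j * ξ i * ξ j)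
    (ξ : Fin 3 → ℝ) : 0 ≤ ∑ i, ∑ j, A i j * ξ i * ξ j := by
  rcases eq_or_ne ξ 0 with h | h
  · simp [h]
  · exact (hApos ξ h).le

lemma quad_re_nonneg (A : Matrix (Fin 3) (Fin 3) ℝ)
    (hApos : ∀ ξ : Fin 3 → ℝ, ξ ≠ 0 → 0 < ∑ i, ∑ j, A i j * ξ i * ξ j)
    (g : Fin 3 → ℂ) : 0 ≤ (∑ i, ∑ j, (A i j : ℂ) * g j * star (g i)).re := by
  rw [quad_re]
  have h1 := quad_nonneg A hApos (fun i => (g i).re)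
  have h2 := quad_nonneg A hApos (fun i => (g i).im)
  have e1 : ∑ i, ∑ j, A i j * (g j).re * (g i).re = ∑ i, ∑ j, A i j * (g i).re * (g j).re := by
    refine Finset.sum_congr rfl fun i _ => Finset.sum_congr rfl fun j _ => by ring
  have e2 : ∑ i, ∑ j, A i j * (g j).im * (g i).im = ∑ i, ∑ j, A i j * (g i).im * (g j).im := by
    refine Finset.sum_congr rfl fun i _ => Finset.sum_congr rfl fun j _ => by ring
  rw [e1, e2]; positivity

lemma quad_re_eq_zero (A : Matrix (Fin 3) (Fin 3) ℝ)
    (hApos : ∀ ξ : Fin 3 → ℝ, ξ ≠ 0 → 0 < ∑ i, ∑ j, A i j * ξ i * ξ j)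
    (g : Fin 3 → ℂ) (h : (∑ i, ∑ j, (A i j : ℂ) * g j * star (g i)).re = 0) : g = 0 := by
  rw [quad_re] at h
  have e1 : ∑ i, ∑ j, A i j * (g j).re * (g i).re
      = ∑ i, ∑ j, A i j * (fun k => (g k).re) i * (fun k => (g k).re) j := by
    refine Finset.sum_congr rfl fun i _ => Finset.sum_congr rfl fun j _ => by ring
  have e2 : ∑ i, ∑ j, A i j * (g j).im * (g i).im
      = ∑ i, ∑ j, A i j * (fun k => (g k).im) i * (fun k => (g k).im) j := by
    refine Finset.sum_congr rfl fun i _ => Finset.sum_congr rfl fun j _ => by ring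
  rw [e1, e2] at h
  have hre : (fun k => (g k).re) = 0 := by
    by_contra hne
    have := hApos _ hne
    have h2' : 0 ≤ ∑ i, ∑ j, A i j * (fun k => (g k).im) i * (fun k => (g k).im) j :=
      quad_nonneg A hApos (fun k => (g k).im)
    linarith
  have him : (fun k => (g k).im) = 0 := by
    by_contra hne
    have := hApos _ hne
    have h1' : 0 ≤ ∑ i, ∑ j, A i j * (fun k => (g k).re) i * (fun k => (g k).re) j :=
      quad_nonneg A hApos (fun k => (g k).re)
    linarith
  funext k
  have hr : (g k).re = 0 := congrFun hre k
  have hi : (g k).im = 0 := congrFun him k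
  exact Complex.ext hr hi

lemma sq_le_sum {g : X3 → Fin 3 → ℂ} (z : X3) (j : Fin 3) :
    ‖g z j‖ ^ 2 ≤ ∑ i, ‖g z i‖ ^ 2 :=
  Finset.single_le_sum (f := fun i => ‖g z i‖ ^ 2) (fun i _ => by positivity) (Finset.mem_univ j)

lemma integrable_bilin (A : Matrix (Fin 3) (Fin 3) ℝ) {g h : X3 → Fin 3 → ℂ} {s : Set X3}
    (hgm : Measurable g) (hhm : Measurable h)
    (hg : IntegrableOn (fun z => ∑ i, ‖g z i‖ ^ 2) s)
    (hh : IntegrableOn (fun z => ∑ i, ‖h z i‖ ^ 2) s) :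
    IntegrableOn (fun z => ∑ i, ∑ j, (A i j : ℂ) * g z j * star (h z i)) s := by
  have hmeas : AEStronglyMeasurable
      (fun z => ∑ i, ∑ j, (A i j : ℂ) * g z j * star (h z i)) (volume.restrict s) := by
    have : Measurable (fun z => ∑ i, ∑ j, (A i j : ℂ) * g z j * star (h z i)) := by
      refine Finset.measurable_sum _ fun i _ => Finset.measurable_sum _ fun j _ => ?_
      have m1 : Measurable fun z => g z j := (measurable_pi_apply j).comp hgm
      have m2 : Measurable fun z => h z i := (measurable_pi_apply i).comp hhm
      exact (m1.const_mul _).mul (continuous_star.measurable.comp m2)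
    exact this.aestronglyMeasurable
  refine Integrable.mono' ((hg.add hh).const_mul (∑ i, ∑ j, |A i j|)) hmeas
    (Filter.Eventually.of_forall fun z => ?_)
  calc ‖∑ i, ∑ j, (A i j : ℂ) * g z j * star (h z i)‖
      ≤ ∑ i, ∑ j, ‖(A i j : ℂ) * g z j * star (h z i)‖ := by
        refine (norm_sum_le _ _).trans (Finset.sum_le_sum fun i _ => norm_sum_le _ _)
    _ ≤ ∑ i, ∑ j, |A i j| * ((∑ k, ‖g z k‖ ^ 2) + ∑ k, ‖h z k‖ ^ 2) := by
        refine Finset.sum_le_sum fun i _ => Finset.sum_le_sum fun j _ => ?_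
        rw [norm_mul, norm_mul, norm_star, Complex.norm_real, Real.norm_eq_abs, mul_assoc]
        refine mul_le_mul_of_nonneg_left ?_ (abs_nonneg _)
        have h1 : ‖g z j‖ ^ 2 ≤ ∑ k, ‖g z k‖ ^ 2 := sq_le_sum z j
        have h2 : ‖h z i‖ ^ 2 ≤ ∑ k, ‖h z k‖ ^ 2 := sq_le_sum z i
        nlinarith [norm_nonneg (g z j), norm_nonneg (h z i)]
    _ = (∑ i, ∑ j, |A i j|) * ((∑ k, ‖g z k‖ ^ 2) + ∑ k, ‖h z k‖ ^ 2) := by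
        rw [Finset.sum_mul]
        exact Finset.sum_congr rfl fun i _ => (Finset.sum_mul _ _ _).symm

lemma integrable_scal {u w : X3 → ℂ} {s : Set X3} (hu : Continuous u) (hw : Continuous w)
    (hu2 : IntegrableOn (fun z => ‖u z‖ ^ 2) s) (hw2 : IntegrableOn (fun z => ‖w z‖ ^ 2) s) :
    IntegrableOn (fun z => u z * star (w z)) s := by
  refine Integrable.mono' (hu2.add hw2)
    ((hu.mul (continuous_star.comp hw)).aestronglyMeasurable)
    (Filter.Eventually.of_forall fun z => ?_)
  simp only [Pi.add_apply]
  rw [norm_mul, norm_star]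
  nlinarith [norm_nonneg (u z), norm_nonneg (w z), sq_nonneg (‖u z‖ - ‖w z‖)]

lemma isOpen_cylY : IsOpen cylY := by
  have : cylY = (fun z : X3 => z 0) ⁻¹' Ioo 0 1 ∩ (fun z : X3 => z 1) ⁻¹' Ioo 0 1 := rfl
  rw [this]
  exact ((isOpen_Ioo.preimage (continuous_apply 0)).inter
    (isOpen_Ioo.preimage (continuous_apply 1)))

lemma per_zsmul {α : Type*} {f : X3 → α} {p : X3} (h : ∀ z, f (z + p) = f z) :
    ∀ (n : ℤ) (z : X3), f (z + n • p) = f z := by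
  intro n
  induction n using Int.induction_on with
  | zero => simp
  | succ k ih =>
    intro z
    have e : z + ((k : ℤ) + 1) • p = (z + (k : ℤ) • p) + p := by
      rw [add_smul, one_smul, ← add_assoc]
    rw [e, h, ih]
  | pred k ih =>
    intro z
    have e : z + (-(k : ℤ) - 1) • p + p = z + (-(k : ℤ)) • p := by
      rw [sub_smul, one_smul, add_sub, sub_add_cancel]
    have := h (z + (-(k : ℤ) - 1) • p)
    rw [e] at this
    rw [← this, ih]

lemma ae_ne_int : ∀ᵐ z : X3, (∀ m : ℤ, z 0 ≠ (m : ℝ)) ∧ (∀ m : ℤ, z 1 ≠ (m : ℝ)) := by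
  rw [MeasureTheory.volume_pi]
  refine Filter.Eventually.and ?_ ?_ <;>
  · rw [MeasureTheory.ae_all_iff]
    intro m
    exact MeasureTheory.Measure.ae_eval_ne _ _ _

lemma Dzero_global {Dψ : X3 → Fin 3 → ℂ} (hDm : Measurable Dψ)
    (hper0 : ∀ z, Dψ (z + Pi.single 0 1) = Dψ z) (hper1 : ∀ z, Dψ (z + Pi.single 1 1) = Dψ z)
    (hae : ∀ᵐ z ∂(volume.restrict cylY), Dψ z = 0) : ∀ᵐ z : X3, Dψ z = 0 := by
  have hNs : MeasurableSet {z : X3 | Dψ z ≠ 0} :=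
    hDm (MeasurableSet.compl (measurableSet_singleton 0))
  have hN : volume ({z : X3 | Dψ z ≠ 0} ∩ cylY) = 0 := by
    have := (MeasureTheory.ae_iff).1 hae
    rwa [Measure.restrict_apply hNs] at this
  have per2 : ∀ (m n : ℤ) (z : X3),
      Dψ (z + ((m : ℤ) • Pi.single 0 1 + (n : ℤ) • Pi.single 1 1)) = Dψ z := by
    intro m n z
    rw [← add_assoc, per_zsmul hper1 n, per_zsmul hper0 m]
  set B : Set X3 := {z : X3 | ¬ ((∀ m : ℤ, z 0 ≠ (m : ℝ)) ∧ (∀ m : ℤ, z 1 ≠ (m : ℝ)))} with hBdef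
  have hB : volume B = 0 := (MeasureTheory.ae_iff).1 ae_ne_int
  set S : ℤ × ℤ → Set X3 := fun q =>
    (fun z : X3 => z + ((-q.1 : ℤ) • Pi.single 0 1 + (-q.2 : ℤ) • Pi.single 1 1)) ⁻¹'
      ({z : X3 | Dψ z ≠ 0} ∩ cylY) with hSdef
  have hS : ∀ q, volume (S q) = 0 := by
    intro q
    rw [hSdef]
    simp only
    rw [measure_preimage_add_right]
    exact hN
  rw [MeasureTheory.ae_iff]
  refine measure_mono_null ?_ (measure_union_null hB (measure_iUnion_null hS))
  intro z hz
  by_cases hzB : z ∈ B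
  · exact Or.inl hzB
  · refine Or.inr (mem_iUnion.2 ⟨(⌊z 0⌋, ⌊z 1⌋), ?_⟩)
    rw [hBdef] at hzB
    simp only [mem_setOf_eq, not_not] at hzB
    obtain ⟨h0, h1⟩ := hzB
    show (z + ((-⌊z 0⌋ : ℤ) • (Pi.single 0 1 : X3) + (-⌊z 1⌋ : ℤ) • (Pi.single 1 1 : X3))) ∈
      ({z : X3 | Dψ z ≠ 0} ∩ cylY)
    constructor
    · show Dψ _ ≠ 0
      rw [per2]
      exact hz
    · constructor
      · have he : (z + ((-⌊z 0⌋ : ℤ) • (Pi.single 0 1 : X3) + (-⌊z 1⌋ : ℤ) • (Pi.single 1 1 : X3))) 0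
            = z 0 - (⌊z 0⌋ : ℝ) := by
          simp [Pi.single_apply, Int.fract, sub_eq_add_neg]
        rw [he]
        constructor
        · have hle := Int.floor_le (z 0)
          have hne := h0 ⌊z 0⌋
          have : (⌊z 0⌋ : ℝ) < z 0 := lt_of_le_of_ne hle (Ne.symm hne)
          linarith
        · have := Int.lt_floor_add_one (z 0)
          linarith
      · have he : (z + ((-⌊z 0⌋ : ℤ) • (Pi.single 0 1 : X3) + (-⌊z 1⌋ : ℤ) • (Pi.single 1 1 : X3))) 1
            = z 1 - (⌊z 1⌋ : ℝ) := by
          simp [Pi.single_apply, Int.fract, sub_eq_add_neg]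
        rw [he]
        constructor
        · have hle := Int.floor_le (z 1)
          have hne := h1 ⌊z 1⌋
          have : (⌊z 1⌋ : ℝ) < z 1 := lt_of_le_of_ne hle (Ne.symm hne)
          linarith
        · have := Int.lt_floor_add_one (z 1)
          linarith

lemma ae_const_of_Dzero {ψ : X3 → ℂ} {Dψ : X3 → Fin 3 → ℂ}
    (hd : ∀ z, HasFDerivAt ψ (gradCLM (Dψ z)) z) (hDm : Measurable Dψ)
    (hglobal : ∀ᵐ z : X3, Dψ z = 0) (a : X3) :
    ∀ᵐ z : X3, ψ (z + a) = ψ z := by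
  have hNvol : ∀ b : X3, volume {z : X3 | Dψ (z + b) = 0}ᶜ = 0 := by
    intro b
    have : {z : X3 | Dψ (z + b) = 0}ᶜ = (fun z : X3 => z + b) ⁻¹' {z : X3 | ¬ Dψ z = 0} := rfl
    rw [this, measure_preimage_add_right]
    exact (MeasureTheory.ae_iff).1 hglobal
  have hmeasset : MeasurableSet {x : X3 × ℝ | Dψ (x.1 + x.2 • a) = 0} := by
    have hc : Continuous fun x : X3 × ℝ => x.1 + x.2 • a :=
      continuous_fst.add (continuous_snd.smul continuous_const)
    exact (hDm.comp hc.measurable) (measurableSet_singleton 0)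
  have hswap : ∀ᵐ t : ℝ, ∀ᵐ z : X3, Dψ (z + t • a) = 0 := by
    refine Filter.Eventually.of_forall fun t => ?_
    rw [MeasureTheory.ae_iff]
    exact hNvol (t • a)
  have hzt : ∀ᵐ z : X3, ∀ᵐ t : ℝ, Dψ (z + t • a) = 0 :=
    (MeasureTheory.Measure.ae_ae_comm hmeasset).2 hswap
  filter_upwards [hzt] with z hz
  set F : ℝ → ℂ := fun t => ψ (z + t • a) with hF
  set F' : ℝ → ℂ := fun t => gradCLM (Dψ (z + t • a)) a with hF'
  have hderiv : ∀ t : ℝ, HasDerivAt F (F' t) t := by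
    intro t
    have hline : HasDerivAt (fun t : ℝ => z + t • a) a t := by
      have h1 : HasDerivAt (fun t : ℝ => t • a) ((1 : ℝ) • a) t :=
        (hasDerivAt_id t).smul_const a
      rw [one_smul] at h1
      exact h1.const_add z
    exact (hd (z + t • a)).comp_hasDerivAt t hline
  have hzero : ∀ᵐ t : ℝ, F' t = 0 := by
    filter_upwards [hz] with t ht
    rw [hF']
    simp only [ht]
    simp [gradCLM_apply]
  have hInt : IntervalIntegrable F' volume 0 1 := by
    rw [intervalIntegrable_iff]
    exact (integrableOn_zero).congr (ae_restrict_of_ae (hzero.mono fun t ht => ht.symm))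
  have hFTC : ∫ t in (0:ℝ)..1, F' t = F 1 - F 0 :=
    intervalIntegral.integral_eq_sub_of_hasDerivAt (fun t _ => hderiv t) hInt
  have hintzero : ∫ t in (0:ℝ)..1, F' t = 0 := by
    rw [intervalIntegral.integral_of_le zero_le_one]
    rw [MeasureTheory.setIntegral_congr_ae measurableSet_Ioc (hzero.mono fun t ht _ => ht)]
    simp
  have hF10 : F 1 = F 0 := by
    have := hFTC.symm.trans hintzero
    linear_combination this
  have e1 : F 1 = ψ (z + a) := by rw [hF]; simp
  have e0 : F 0 = ψ z := by rw [hF]; simp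
  rw [← e1, ← e0, hF10]

lemma ae_zero_global {ψ : X3 → ℂ} {Dψ : X3 → Fin 3 → ℂ}
    (hd : ∀ z, HasFDerivAt ψ (gradCLM (Dψ z)) z) (hDm : Measurable Dψ)
    (hglobal : ∀ᵐ z : X3, Dψ z = 0)
    {Y₀ : Set X3} (hY₀pos : 0 < volume Y₀)
    (hzero : ∀ᵐ z ∂(volume.restrict Y₀), ψ z = 0) : ∀ᵐ z : X3, ψ z = 0 := by
  have hcont : Continuous ψ := cont_of_D hd
  have hmeasset : MeasurableSet {x : X3 × X3 | ψ (x.1 + x.2) = ψ x.1} := by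
    have hc : Continuous fun x : X3 × X3 => ψ (x.1 + x.2) - ψ x.1 :=
      (hcont.comp (continuous_fst.add continuous_snd)).sub (hcont.comp continuous_fst)
    have hset : {x : X3 × X3 | ψ (x.1 + x.2) = ψ x.1}
        = (fun x : X3 × X3 => ψ (x.1 + x.2) - ψ x.1) ⁻¹' {0} := by
      ext x; simp [sub_eq_zero]
    rw [hset]
    exact hc.measurable (measurableSet_singleton 0)
  have hswap : ∀ᵐ a : X3, ∀ᵐ z : X3, ψ (z + a) = ψ z :=
    Filter.Eventually.of_forall fun a => ae_const_of_Dzero hd hDm hglobal a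
  have hza : ∀ᵐ z : X3, ∀ᵐ a : X3, ψ (z + a) = ψ z :=
    (MeasureTheory.Measure.ae_ae_comm hmeasset).2 hswap
  have hE : ∀ᵐ z : X3, ∀ᵐ w : X3, ψ w = ψ z := by
    filter_upwards [hza] with z hz
    have h1 : volume {a : X3 | ¬ ψ (z + a) = ψ z} = 0 := (MeasureTheory.ae_iff).1 hz
    have h2 : {a : X3 | ¬ ψ (z + a) = ψ z}
        = (fun a : X3 => z + a) ⁻¹' {w : X3 | ¬ ψ w = ψ z} := rfl
    rw [MeasureTheory.ae_iff]
    rw [h2, measure_preimage_add] at h1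
    exact h1
  have hNzero : volume ({z : X3 | ¬ ψ z = 0} ∩ Y₀) = 0 := by
    have h := (MeasureTheory.ae_iff).1 hzero
    have hms : MeasurableSet {z : X3 | ¬ ψ z = 0} := by
      have : {z : X3 | ¬ ψ z = 0} = (ψ ⁻¹' {0})ᶜ := rfl
      rw [this]
      exact (hcont.measurable (measurableSet_singleton 0)).compl
    rwa [Measure.restrict_apply hms] at h
  have hbad : volume ({z : X3 | ¬ ∀ᵐ w : X3, ψ w = ψ z} ∪ ({z : X3 | ¬ ψ z = 0} ∩ Y₀)) = 0 :=
    measure_union_null ((MeasureTheory.ae_iff).1 hE) hNzero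
  have hdiff : 0 < volume (Y₀ \
      ({z : X3 | ¬ ∀ᵐ w : X3, ψ w = ψ z} ∪ ({z : X3 | ¬ ψ z = 0} ∩ Y₀))) := by
    rwa [measure_diff_null hbad]
  obtain ⟨z₀, hz₀⟩ := nonempty_of_measure_ne_zero hdiff.ne'
  obtain ⟨hz₀Y, hz₀n⟩ := hz₀
  rw [mem_union, not_or] at hz₀n
  obtain ⟨hg, hv⟩ := hz₀n
  simp only [mem_setOf_eq, not_not] at hg
  have hψz₀ : ψ z₀ = 0 := by
    by_contra hne
    exact hv ⟨hne, hz₀Y⟩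
  filter_upwards [hg] with w hw
  rw [hw, hψz₀]
theorem stmt15 (Y₀ : Set X3) (hY₀open : IsOpen Y₀) (hY₀sub : Y₀ ⊆ cellY)
    (hY₀pos : 0 < volume Y₀)
    (ω ε₂ : ℝ) (hω : 0 < ω) (hε₂ : 0 < ε₂)
    (A : Matrix (Fin 3) (Fin 3) ℝ)
    (hApos : ∀ ξ : Fin 3 → ℝ, ξ ≠ 0 → 0 < ∑ i, ∑ j, A i j * ξ i * ξ j)
    (u₁ : X3 → ℂ) :
    (∀ (vh : X3 → ℂ) (Dvh : X3 → Fin 3 → ℂ), MemHper vh Dvh →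
      (∫ z in cylY, ∑ i, ∑ j, (A i j : ℂ) * Dvh z j * star (Dvh z i)) -
          Complex.I * (ω : ℂ) ^ 2 * (ε₂ : ℂ) *
            (∫ z in Y₀, ((‖vh z‖ ^ 2 : ℝ) : ℂ)) = 0 →
        (∀ᵐ z ∂(volume.restrict cylY), Dvh z = 0) ∧
        (∀ᵐ z ∂(volume.restrict Y₀), vh z = 0) ∧
        (∀ᵐ z ∂(volume.restrict cylY), vh z = 0)) ∧
    (∀ (v₁ : X3 → ℂ) (Dv₁ : X3 → Fin 3 → ℂ) (v₂ : X3 → ℂ) (Dv₂ : X3 → Fin 3 → ℂ),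
      MemHper v₁ Dv₁ → MemHper v₂ Dv₂ →
      (∀ (ψ : X3 → ℂ) (Dψ : X3 → Fin 3 → ℂ), MemHper ψ Dψ →
        (∫ z in cylY, ∑ i, ∑ j, (A i j : ℂ) * Dv₁ z j * star (Dψ z i)) -
            Complex.I * (ω : ℂ) ^ 2 * (ε₂ : ℂ) * (∫ z in Y₀, v₁ z * star (ψ z)) =
          Complex.I * (ε₂ : ℂ) * ∫ z in Y₀, u₁ z * star (ψ z)) →
      (∀ (ψ : X3 → ℂ) (Dψ : X3 → Fin 3 → ℂ), MemHper ψ Dψ →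
        (∫ z in cylY, ∑ i, ∑ j, (A i j : ℂ) * Dv₂ z j * star (Dψ z i)) -
            Complex.I * (ω : ℂ) ^ 2 * (ε₂ : ℂ) * (∫ z in Y₀, v₂ z * star (ψ z)) =
          Complex.I * (ε₂ : ℂ) * ∫ z in Y₀, u₁ z * star (ψ z)) →
      ∀ᵐ z ∂(volume.restrict cylY), v₁ z = v₂ z) := by
  have part1 : ∀ (vh : X3 → ℂ) (Dvh : X3 → Fin 3 → ℂ), MemHper vh Dvh →
      (∫ z in cylY, ∑ i, ∑ j, (A i j : ℂ) * Dvh z j * star (Dvh z i)) -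
          Complex.I * (ω : ℂ) ^ 2 * (ε₂ : ℂ) *
            (∫ z in Y₀, ((‖vh z‖ ^ 2 : ℝ) : ℂ)) = 0 →
        (∀ᵐ z ∂(volume.restrict cylY), Dvh z = 0) ∧
        (∀ᵐ z ∂(volume.restrict Y₀), vh z = 0) ∧
        (∀ᵐ z ∂(volume.restrict cylY), vh z = 0) := by
    rintro vh Dvh ⟨hd, hp0, hp1, hL2, hDL2⟩ heq
    have hDm := meas_of_D hd
    have hcont := cont_of_D hd
    have hΦint : IntegrableOn (fun z => ∑ i, ∑ j, (A i j : ℂ) * Dvh z j * star (Dvh z i))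
        cylY := integrable_bilin A hDm hDm hDL2 hDL2
    have hofr : (∫ z in Y₀, ((‖vh z‖ ^ 2 : ℝ) : ℂ)) = ((∫ z in Y₀, ‖vh z‖ ^ 2 : ℝ) : ℂ) :=
      integral_ofReal
    rw [hofr] at heq
    set r : ℝ := ∫ z in Y₀, ‖vh z‖ ^ 2 with hrdef
    have heq' : (∫ z in cylY, ∑ i, ∑ j, (A i j : ℂ) * Dvh z j * star (Dvh z i))
        = Complex.I * (ω : ℂ) ^ 2 * (ε₂ : ℂ) * (r : ℂ) := by linear_combination heq
    have hre0 : (∫ z in cylY, ∑ i, ∑ j, (A i j : ℂ) * Dvh z j * star (Dvh z i)).re = 0 := by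
      have hcast : Complex.I * (ω : ℂ) ^ 2 * (ε₂ : ℂ) * (r : ℂ)
          = Complex.I * (((ω ^ 2 * ε₂ * r : ℝ)) : ℂ) := by push_cast; ring
      rw [heq', hcast, Complex.mul_re, Complex.I_re, Complex.I_im, Complex.ofReal_re,
        Complex.ofReal_im]
      ring
    have hre_comm : ∫ z in cylY, (∑ i, ∑ j, (A i j : ℂ) * Dvh z j * star (Dvh z i)).re
        = (∫ z in cylY, ∑ i, ∑ j, (A i j : ℂ) * Dvh z j * star (Dvh z i)).re := by
      have := Complex.reCLM.integral_comp_comm hΦint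
      simpa using this
    have hreint : Integrable (fun z => (∑ i, ∑ j, (A i j : ℂ) * Dvh z j * star (Dvh z i)).re)
        (volume.restrict cylY) := by
      have := Complex.reCLM.integrable_comp hΦint
      simpa using this
    have haeD : ∀ᵐ z ∂(volume.restrict cylY), Dvh z = 0 := by
      have h00 : (fun z => (∑ i, ∑ j, (A i j : ℂ) * Dvh z j * star (Dvh z i)).re)
          =ᵐ[volume.restrict cylY] 0 :=
        (integral_eq_zero_iff_of_nonneg (fun z => quad_re_nonneg A hApos (Dvh z)) hreint).1
          (hre_comm.trans hre0)
      filter_upwards [h00] with z h0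
      exact quad_re_eq_zero A hApos (Dvh z) h0
    have hΦae0 : (fun z => ∑ i, ∑ j, (A i j : ℂ) * Dvh z j * star (Dvh z i))
        =ᵐ[volume.restrict cylY] 0 := by
      filter_upwards [haeD] with z h
      simp [h]
    have hΦ0 : (∫ z in cylY, ∑ i, ∑ j, (A i j : ℂ) * Dvh z j * star (Dvh z i)) = 0 := by
      rw [integral_congr_ae hΦae0]
      simp
    have hne : Complex.I * (ω : ℂ) ^ 2 * (ε₂ : ℂ) ≠ 0 := by
      refine mul_ne_zero (mul_ne_zero Complex.I_ne_zero ?_) ?_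
      · exact pow_ne_zero _ (Complex.ofReal_ne_zero.2 hω.ne')
      · exact Complex.ofReal_ne_zero.2 hε₂.ne'
    have hrc : (r : ℂ) = 0 := by
      rw [hΦ0] at heq'
      exact (mul_eq_zero.1 heq'.symm).resolve_left hne
    have hr0 : r = 0 := Complex.ofReal_eq_zero.1 hrc
    have hrint : IntegrableOn (fun z => ‖vh z‖ ^ 2) Y₀ := hL2.mono_set hY₀sub
    have hvsq : (fun z => ‖vh z‖ ^ 2) =ᵐ[volume.restrict Y₀] 0 :=
      (integral_eq_zero_iff_of_nonneg (fun z => by positivity) hrint).1 hr0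
    have haev : ∀ᵐ z ∂(volume.restrict Y₀), vh z = 0 := by
      filter_upwards [hvsq] with z h
      have h1 : ‖vh z‖ ^ 2 = 0 := h
      have h2 : ‖vh z‖ = 0 := by nlinarith [norm_nonneg (vh z)]
      exact norm_eq_zero.1 h2
    have hglob : ∀ᵐ z : X3, Dvh z = 0 :=
      Dzero_global hDm (D_periodic hd hp0) (D_periodic hd hp1) haeD
    have hvglob : ∀ᵐ z : X3, vh z = 0 := ae_zero_global hd hDm hglob hY₀pos haev
    exact ⟨haeD, haev, ae_restrict_of_ae hvglob⟩
  refine ⟨part1, ?_⟩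
  intro v₁ Dv₁ v₂ Dv₂ h₁ h₂ hw₁ hw₂
  obtain ⟨hd₁, hp0₁, hp1₁, hL2₁, hDL2₁⟩ := h₁
  obtain ⟨hd₂, hp0₂, hp1₂, hL2₂, hDL2₂⟩ := h₂
  have hcont₁ := cont_of_D hd₁
  have hcont₂ := cont_of_D hd₂
  have hDm₁ := meas_of_D hd₁
  have hDm₂ := meas_of_D hd₂
  set v : X3 → ℂ := fun z => v₁ z - v₂ z with hvdef
  set Dv : X3 → Fin 3 → ℂ := fun z => Dv₁ z - Dv₂ z with hDvdef
  have hcontv : Continuous v := hcont₁.sub hcont₂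
  have hdv : ∀ z, HasFDerivAt v (gradCLM (Dv z)) z := by
    intro z
    show HasFDerivAt v (gradCLM (Dv₁ z - Dv₂ z)) z
    rw [gradCLM_sub]
    exact (hd₁ z).sub (hd₂ z)
  have hDmv : Measurable Dv := meas_of_D hdv
  have hL2v : IntegrableOn (fun z => ‖v z‖ ^ 2) cellY := by
    refine Integrable.mono' ((hL2₁.add hL2₂).const_mul 2)
      ((hcontv.norm.pow 2).aestronglyMeasurable) (Filter.Eventually.of_forall fun z => ?_)
    rw [Real.norm_eq_abs, abs_of_nonneg (by positivity)]
    simp only [Pi.add_apply]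
    show ‖v₁ z - v₂ z‖ ^ 2 ≤ 2 * (‖v₁ z‖ ^ 2 + ‖v₂ z‖ ^ 2)
    have hsq : ‖v₁ z - v₂ z‖ ^ 2 ≤ (‖v₁ z‖ + ‖v₂ z‖) ^ 2 :=
      pow_le_pow_left₀ (norm_nonneg _) (norm_sub_le (v₁ z) (v₂ z)) 2
    nlinarith [sq_nonneg (‖v₁ z‖ - ‖v₂ z‖)]
  have hDL2v : IntegrableOn (fun z => ∑ i, ‖Dv z i‖ ^ 2) cylY := by
    refine Integrable.mono' ((hDL2₁.add hDL2₂).const_mul 2) ?_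
      (Filter.Eventually.of_forall fun z => ?_)
    · have : Measurable fun z => ∑ i, ‖Dv z i‖ ^ 2 :=
        Finset.measurable_sum _ fun i _ =>
          (((measurable_pi_apply i).comp hDmv).norm).pow_const 2
      exact this.aestronglyMeasurable
    · simp only [Pi.add_apply]
      rw [Real.norm_eq_abs, abs_of_nonneg (by positivity)]
      calc ∑ i, ‖Dv z i‖ ^ 2 ≤ ∑ i, 2 * (‖Dv₁ z i‖ ^ 2 + ‖Dv₂ z i‖ ^ 2) := by
            refine Finset.sum_le_sum fun i _ => ?_
            show ‖Dv₁ z i - Dv₂ z i‖ ^ 2 ≤ 2 * (‖Dv₁ z i‖ ^ 2 + ‖Dv₂ z i‖ ^ 2)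
            have hsq : ‖Dv₁ z i - Dv₂ z i‖ ^ 2 ≤ (‖Dv₁ z i‖ + ‖Dv₂ z i‖) ^ 2 :=
              pow_le_pow_left₀ (norm_nonneg _) (norm_sub_le (Dv₁ z i) (Dv₂ z i)) 2
            nlinarith [sq_nonneg (‖Dv₁ z i‖ - ‖Dv₂ z i‖)]
        _ = 2 * ((∑ i, ‖Dv₁ z i‖ ^ 2) + ∑ i, ‖Dv₂ z i‖ ^ 2) := by
            rw [← Finset.mul_sum, Finset.sum_add_distrib]
  have hmemv : MemHper v Dv := by
    refine ⟨hdv, ?_, ?_, hL2v, hDL2v⟩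
    · intro z
      show v₁ (z + Pi.single 0 1) - v₂ (z + Pi.single 0 1) = v₁ z - v₂ z
      rw [hp0₁, hp0₂]
    · intro z
      show v₁ (z + Pi.single 1 1) - v₂ (z + Pi.single 1 1) = v₁ z - v₂ z
      rw [hp1₁, hp1₂]
  have e₁ := hw₁ v Dv hmemv
  have e₂ := hw₂ v Dv hmemv
  have hb₁ : IntegrableOn (fun z => ∑ i, ∑ j, (A i j : ℂ) * Dv₁ z j * star (Dv z i)) cylY :=
    integrable_bilin A hDm₁ hDmv hDL2₁ hDL2v
  have hb₂ : IntegrableOn (fun z => ∑ i, ∑ j, (A i j : ℂ) * Dv₂ z j * star (Dv z i)) cylY :=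
    integrable_bilin A hDm₂ hDmv hDL2₂ hDL2v
  have hbsub : (∫ z in cylY, ∑ i, ∑ j, (A i j : ℂ) * Dv z j * star (Dv z i))
      = (∫ z in cylY, ∑ i, ∑ j, (A i j : ℂ) * Dv₁ z j * star (Dv z i))
        - ∫ z in cylY, ∑ i, ∑ j, (A i j : ℂ) * Dv₂ z j * star (Dv z i) := by
    rw [← integral_sub hb₁ hb₂]
    refine integral_congr_ae (Filter.Eventually.of_forall fun z => ?_)
    show ∑ i, ∑ j, (A i j : ℂ) * (Dv₁ z j - Dv₂ z j) * star (Dv z i)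
        = (∑ i, ∑ j, (A i j : ℂ) * Dv₁ z j * star (Dv z i))
          - ∑ i, ∑ j, (A i j : ℂ) * Dv₂ z j * star (Dv z i)
    rw [← Finset.sum_sub_distrib]
    refine Finset.sum_congr rfl fun i _ => ?_
    rw [← Finset.sum_sub_distrib]
    refine Finset.sum_congr rfl fun j _ => by ring
  have hs₁ : IntegrableOn (fun z => v₁ z * star (v z)) Y₀ :=
    integrable_scal hcont₁ hcontv (hL2₁.mono_set hY₀sub) (hL2v.mono_set hY₀sub)
  have hs₂ : IntegrableOn (fun z => v₂ z * star (v z)) Y₀ :=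
    integrable_scal hcont₂ hcontv (hL2₂.mono_set hY₀sub) (hL2v.mono_set hY₀sub)
  have hssub : (∫ z in Y₀, v z * star (v z))
      = (∫ z in Y₀, v₁ z * star (v z)) - ∫ z in Y₀, v₂ z * star (v z) := by
    rw [← integral_sub hs₁ hs₂]
    refine integral_congr_ae (Filter.Eventually.of_forall fun z => ?_)
    show (v₁ z - v₂ z) * star (v z) = v₁ z * star (v z) - v₂ z * star (v z)
    ring
  have hnorm : (∫ z in Y₀, v z * star (v z)) = ∫ z in Y₀, ((‖v z‖ ^ 2 : ℝ) : ℂ) := by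
    refine integral_congr_ae (Filter.Eventually.of_forall fun z => ?_)
    show v z * star (v z) = ((‖v z‖ ^ 2 : ℝ) : ℂ)
    rw [show star (v z) = (starRingEnd ℂ) (v z) from rfl, RCLike.mul_conj]
    norm_cast
  have heqv : (∫ z in cylY, ∑ i, ∑ j, (A i j : ℂ) * Dv z j * star (Dv z i)) -
      Complex.I * (ω : ℂ) ^ 2 * (ε₂ : ℂ) * (∫ z in Y₀, ((‖v z‖ ^ 2 : ℝ) : ℂ)) = 0 := by
    rw [← hnorm, hssub, hbsub]
    linear_combination e₁ - e₂
  obtain ⟨-, -, hfin⟩ := part1 v Dv hmemv heqv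
  filter_upwards [hfin] with z hz
  exact sub_eq_zero.1 hz
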